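/- Let k be a field of characteristic 0, F ∈ k[X,Y] an irreducible binary form of degree r with F(1,0) = a_0 ≠ 0, and θ a root of F(X,1) in an extension of k. Define ω_1 = 1 and ω_m = a_0 θ^{m-1} + a_1 θ^{m-2} + ⋯ + a_{m-2} θ for m = 2, ..., r, where F = a_0 X^r + a_1 X^{r-1} Y + ⋯ + a_r Y^r. Then ω_1, ..., ω_r form a k-basis of K = k(θ), and the discriminant of this basis equals the discriminant of F: det(Tr_{K/k}(ω_i ω_j))_{1≤i,j≤r} = D(F). -/

import Mathlib

open Polynomial

lemma aux_sq_prod {E : Type*} [CommRing E] {n : ℕ} (x : Fin n → E) :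
    ∏ i : Fin n, ∏ j ∈ Finset.Ioi i, (x j - x i) ^ 2 = (Matrix.vandermonde x).det ^ 2 := by
  rw [Matrix.det_vandermonde, ← Finset.prod_pow]
  refine Finset.prod_congr rfl fun i _ => ?_
  rw [← Finset.prod_pow]

lemma aux_perm {E : Type*} [CommRing E] {n : ℕ} (x : Fin n → E) (σ : Equiv.Perm (Fin n)) :
    ∏ i : Fin n, ∏ j ∈ Finset.Ioi i, (x (σ j) - x (σ i)) ^ 2
      = ∏ i : Fin n, ∏ j ∈ Finset.Ioi i, (x j - x i) ^ 2 := by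
  rw [aux_sq_prod, aux_sq_prod]
  have hv : Matrix.vandermonde (x ∘ σ) = (Matrix.vandermonde x).submatrix σ id := by
    ext i j; rfl
  have : Matrix.vandermonde (x ∘ σ) = fun i => (Matrix.vandermonde x) (σ i) := by
    ext i j; rfl
  calc (Matrix.vandermonde fun i => x (σ i)).det ^ 2
      = ((Matrix.vandermonde x).submatrix σ id).det ^ 2 := by
        rw [show (fun i => x (σ i)) = x ∘ ⇑σ from rfl, hv]
    _ = (((Equiv.Perm.sign σ : ℤ) : E) * (Matrix.vandermonde x).det) ^ 2 := by
        rw [Matrix.det_permute]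
    _ = (Matrix.vandermonde x).det ^ 2 := by
        rw [mul_pow, ← Int.cast_pow, ← Units.val_pow_eq_pow_val, Int.units_sq]
        simp

lemma aux_cast {E : Type*} [CommRing E] {n m : ℕ} (h : m = n) (x : Fin n → E) :
    ∏ i : Fin m, ∏ j ∈ Finset.Ioi i, (x (Fin.cast h j) - x (Fin.cast h i)) ^ 2
      = ∏ i : Fin n, ∏ j ∈ Finset.Ioi i, (x j - x i) ^ 2 := by
  subst h
  rfl

lemma aux_sq_comm {E : Type*} [CommRing E] (x y : E) : (x - y) ^ 2 = (y - x) ^ 2 := by ring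

/-- Let `F = a₀X^r + ⋯ + a_rY^r` be an irreducible binary form over a field `k`
of characteristic 0 with `a₀ ≠ 0`, `θ` a root of `F(X,1)` generating `K = k(θ)`, and
`Θ⁽¹⁾,…,Θ⁽ʳ⁾` the roots of `F(X,1)` in a splitting field `L`.  The elements `ω₁ = 1`,
`ω_m = a₀θ^{m-1} + a₁θ^{m-2} + ⋯ + a_{m-2}θ` (`m = 2,…,r`) form a `k`-basis of `K`, and the
discriminant of this basis equals the discriminant of the form:
`det(Tr_{K/k}(ωᵢωⱼ)) = D(F) = a₀^{2r-2} ∏_{i<j} (Θ⁽ⁱ⁾-Θ⁽ʲ⁾)²`. -/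
theorem stmt14 {k K L : Type*} [Field k] [CharZero k] [Field K] [Algebra k K]
    [Field L] [Algebra k L]
    (r : ℕ) (hr : 1 ≤ r) (a : ℕ → k) (ha0 : a 0 ≠ 0)
    (f : Polynomial k) (hf : f = ∑ n ∈ Finset.range (r + 1), C (a n) * X ^ (r - n))
    (hirr : Irreducible f) (θ : K) (hθ : Polynomial.aeval θ f = 0)
    (hgen : Algebra.adjoin k {θ} = ⊤)
    (Θ : Fin r → L)
    (hsplit : f.map (algebraMap k L)
      = C (algebraMap k L (a 0)) * ∏ i : Fin r, (X - C (Θ i)))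
    (ω : Fin r → K)
    (hω : ∀ p : Fin r, ω p = if (p : ℕ) = 0 then 1
      else ∑ n ∈ Finset.range p, algebraMap k K (a n) * θ ^ ((p : ℕ) - n)) :
    (∃ b : Module.Basis (Fin r) k K, ⇑b = ω) ∧
    algebraMap k L (Matrix.det (Matrix.of fun p q : Fin r => Algebra.trace k K (ω p * ω q)))
      = algebraMap k L (a 0) ^ (2 * r - 2) *
        ∏ p : Fin r, ∏ q ∈ Finset.Ioi p, (Θ p - Θ q) ^ 2 := by
  have hfne : f ≠ 0 := hirr.ne_zero
  -- the coefficient of degree r is a 0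
  have hcoeff : f.coeff r = a 0 := by
    rw [hf, finset_sum_coeff]
    rw [Finset.sum_eq_single 0 ?h₀ ?h₁]
    · simp
    case h₀ =>
      intro n hn hn0
      have hn' : n ≤ r := Nat.lt_succ_iff.mp (Finset.mem_range.mp hn)
      have : r - n ≠ r := by omega
      simp [coeff_C_mul, coeff_X_pow, this, Ne.symm this]
    case h₁ => intro h; simp at h
  have hdegle : f.natDegree ≤ r := by
    rw [hf]
    refine natDegree_sum_le_of_forall_le _ _ fun n _ => ?_
    refine (natDegree_C_mul_le _ _).trans ?_
    simpa using Nat.sub_le r n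
  have hdeg : f.natDegree = r :=
    le_antisymm hdegle (le_natDegree_of_ne_zero (hcoeff ▸ ha0))
  have hlead : f.leadingCoeff = a 0 := by rw [leadingCoeff, hdeg, hcoeff]
  have hmin : f * C (a 0)⁻¹ = minpoly k θ := by
    have := minpoly.eq_of_irreducible hirr hθ
    rwa [hlead] at this
  have hint : IsIntegral k θ := by
    refine ⟨f * C (a 0)⁻¹, ?_, ?_⟩
    · have := monic_mul_leadingCoeff_inv hfne
      rwa [hlead] at this
    · rw [← aeval_def, map_mul, hθ, zero_mul]
  have hmdeg : (minpoly k θ).natDegree = r := by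
    rw [← hmin, natDegree_mul hfne (by simpa using inv_ne_zero ha0), natDegree_C, hdeg, add_zero]
  -- power basis
  set pB : PowerBasis k K :=
    (Algebra.adjoin.powerBasis hint).map
      ((Subalgebra.equivOfEq _ _ hgen).trans Subalgebra.topEquiv) with hpB
  have hgenθ : pB.gen = θ := rfl
  have hdim : pB.dim = r := hmdeg
  haveI : Module.Finite k K := pB.finite
  have hfr : Module.finrank k K = r := by rw [pB.finrank, hdim]
  set b : Module.Basis (Fin r) k K := pB.basis.reindex (finCongr hdim) with hbdef
  have hb : ∀ i : Fin r, b i = θ ^ (i : ℕ) := by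
    intro i
    rw [hbdef, Module.Basis.reindex_apply, PowerBasis.coe_basis, hgenθ]
    congr 1
  -- the change of basis matrix
  set M : Matrix (Fin r) (Fin r) k := Matrix.of fun p q =>
    if (q : ℕ) = 0 then (if (p : ℕ) = 0 then 1 else 0)
    else if (q : ℕ) ≤ (p : ℕ) then a ((p : ℕ) - (q : ℕ)) else 0 with hMdef
  have hdetM : M.det = a 0 ^ (r - 1) := by
    rw [Matrix.det_of_lowerTriangular M ?tri]
    case tri =>
      intro i j hij
      have hij' : (i : ℕ) < (j : ℕ) := hij
      have h1 : (j : ℕ) ≠ 0 := by omega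
      have h2 : ¬ ((j : ℕ) ≤ (i : ℕ)) := by omega
      have h2' : ¬ (j ≤ i) := by rw [Fin.le_def]; omega
      simp [hMdef, h1, h2, h2']
    obtain ⟨m, rfl⟩ : ∃ m, r = m + 1 := ⟨r - 1, by omega⟩
    have hdiag : ∀ i : Fin (m + 1), M i i = if (i : ℕ) = 0 then 1 else a 0 := by
      intro i
      by_cases hi : (i : ℕ) = 0 <;> simp [hMdef, hi, ← Fin.val_eq_zero_iff]
    calc ∏ i, M i i = ∏ i : Fin (m + 1), (if (i : ℕ) = 0 then 1 else a 0) :=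
          Finset.prod_congr rfl fun i _ => hdiag i
      _ = a 0 ^ m := by
          rw [Fin.prod_univ_succ]
          simp
      _ = a 0 ^ (m + 1 - 1) := by norm_num
  have hωM : ω = (M.map (algebraMap k K)).mulVec ⇑b := by
    funext p
    show ω p = _
    simp only [Matrix.mulVec, dotProduct, Matrix.map_apply]
    rw [hω p]
    by_cases hp : (p : ℕ) = 0
    · rw [if_pos hp]
      rw [Finset.sum_eq_single (⟨0, hr⟩ : Fin r) ?h₀ ?h₁]
      · have h00 : ((⟨0, hr⟩ : Fin r) : ℕ) = 0 := rfl
        rw [hMdef]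
        simp only [Matrix.of_apply, h00, if_pos rfl, if_pos hp]
        rw [hb]
        simp
      case h₀ =>
        intro q _ hq
        have hq' : (q : ℕ) ≠ 0 := fun h => hq (Fin.ext (by simpa using h))
        have hle : ¬ ((q : ℕ) ≤ (p : ℕ)) := by omega
        rw [hMdef]
        simp only [Matrix.of_apply]
        rw [if_neg hq', if_neg hle]
        simp
      case h₁ => intro h; simp at h
    · rw [if_neg hp]
      have rhs_eq : ∑ q : Fin r, algebraMap k K (M p q) * b q
          = ∑ q : Fin r, (if ((q : ℕ) : ℕ) = 0 then 0 else if ((q : ℕ) : ℕ) ≤ (p : ℕ)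
              then algebraMap k K (a ((p : ℕ) - ((q : ℕ) : ℕ))) * θ ^ ((q : ℕ) : ℕ) else 0) := by
        refine Finset.sum_congr rfl fun q _ => ?_
        rw [hMdef]
        simp only [Matrix.of_apply]
        by_cases hq : (q : ℕ) = 0
        · rw [if_pos hq, if_neg hp, if_pos hq]
          simp
        · rw [if_neg hq, if_neg hq]
          by_cases hle : (q : ℕ) ≤ (p : ℕ)
          · rw [if_pos hle, if_pos hle, hb]
          · rw [if_neg hle, if_neg hle]
            simp
      rw [rhs_eq]
      rw [Fin.sum_univ_eq_sum_range
        (fun q : ℕ => (if q = 0 then (0:K) else if q ≤ (p : ℕ)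
          then algebraMap k K (a ((p : ℕ) - q)) * θ ^ q else 0)) r]
      rw [show Finset.range r = Finset.range ((p : ℕ) + 1) ∪ Finset.Ico ((p : ℕ) + 1) r from ?split]
      case split =>
        have hpr : (p : ℕ) < r := p.isLt
        rw [Finset.range_eq_Ico, Finset.range_eq_Ico,
          Finset.Ico_union_Ico_eq_Ico (by omega) (by omega)]
      rw [Finset.sum_union (by
        rw [Finset.range_eq_Ico]
        exact Finset.Ico_disjoint_Ico_consecutive 0 ((p : ℕ) + 1) r)]
      have h2 : ∑ q ∈ Finset.Ico ((p : ℕ) + 1) r, (if q = 0 then (0:K) else if q ≤ (p : ℕ)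
          then algebraMap k K (a ((p : ℕ) - q)) * θ ^ q else 0) = 0 := by
        refine Finset.sum_eq_zero fun q hq => ?_
        obtain ⟨hq1, _⟩ := Finset.mem_Ico.mp hq
        have hle : ¬ (q ≤ (p : ℕ)) := by omega
        have hq0 : q ≠ 0 := by omega
        simp [hle, hq0]
      rw [h2, add_zero]
      rw [Finset.sum_range_succ']
      have h3 : (if (0:ℕ) = 0 then (0:K) else if 0 ≤ (p : ℕ)
          then algebraMap k K (a ((p : ℕ) - 0)) * θ ^ 0 else 0) = 0 := by simp
      rw [h3, add_zero]
      conv_lhs => rw [← Finset.sum_range_reflect]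
      refine Finset.sum_congr rfl fun n hn => ?_
      have hn' : n < (p : ℕ) := Finset.mem_range.mp hn
      have e1 : n + 1 ≠ 0 := by omega
      have e2 : n + 1 ≤ (p : ℕ) := by omega
      rw [if_neg e1, if_pos e2]
      rw [show (p : ℕ) - ((p : ℕ) - 1 - n) = n + 1 from by omega,
        show (p : ℕ) - 1 - n = (p : ℕ) - (n + 1) from by omega]
  -- discriminants
  haveI : Nonempty (Fin r) := ⟨⟨0, hr⟩⟩
  have hdiscb : Algebra.discr k ⇑b ≠ 0 := Algebra.discr_not_zero_of_basis k b
  have hdisc : Algebra.discr k ω = (a 0 ^ (r - 1)) ^ 2 * Algebra.discr k ⇑b := by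
    rw [hωM, Algebra.discr_of_matrix_mulVec, hdetM]
  have hdisc_ne : Algebra.discr k ω ≠ 0 := by
    rw [hdisc]
    exact mul_ne_zero (pow_ne_zero _ (pow_ne_zero _ ha0)) hdiscb
  have hli : LinearIndependent k ω := by
    by_contra h
    exact hdisc_ne (Algebra.discr_zero_of_not_linearIndependent k h)
  refine ⟨⟨basisOfLinearIndependentOfCardEqFinrank hli (by simp [hfr]),
    coe_basisOfLinearIndependentOfCardEqFinrank _ _⟩, ?_⟩
  -- rewrite the determinant as a discriminant
  have hmat : (Matrix.of fun p q : Fin r => Algebra.trace k K (ω p * ω q))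
      = Algebra.traceMatrix k ω := by
    ext p q
    simp [Algebra.traceMatrix_apply, Algebra.traceForm_apply]
  rw [hmat, show (Algebra.traceMatrix k ω).det = Algebra.discr k ω from rfl, hdisc]
  have hpow : algebraMap k L ((a 0 ^ (r - 1)) ^ 2) = algebraMap k L (a 0) ^ (2 * r - 2) := by
    rw [map_pow, map_pow, ← pow_mul]
    congr 1
    omega
  rw [map_mul, hpow]
  congr 1
  -- discr of b equals discr of the power basis
  have hdiscb' : Algebra.discr k ⇑b = Algebra.discr k ⇑pB.basis := by
    rw [hbdef, Module.Basis.coe_reindex]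
    exact Algebra.discr_reindex k pB.basis (finCongr hdim)
  rw [hdiscb']
  -- move to an algebraic closure of L
  set E := AlgebraicClosure L with hE
  have hinjLE : Function.Injective (algebraMap L E) := (algebraMap L E).injective
  apply hinjLE
  rw [← IsScalarTower.algebraMap_apply k L E]
  simp only [map_prod, map_pow, map_sub]
  -- the minimal polynomial and its roots in E
  have hg0 : minpoly k θ ≠ 0 := minpoly.ne_zero hint
  have hgdvd : minpoly k θ ∣ f := ⟨C (a 0), by
    rw [← hmin, mul_assoc, ← C_mul, inv_mul_cancel₀ ha0, C_1, mul_one]⟩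
  have hsep : (minpoly k θ).Separable := hirr.separable.of_dvd hgdvd
  have ha0E : algebraMap k E (a 0) ≠ 0 := by simpa using ha0
  have hgE : (minpoly k θ).map (algebraMap k E) = ∏ i : Fin r, (X - C (algebraMap L E (Θ i))) := by
    have h1 : algebraMap k E = (algebraMap L E).comp (algebraMap k L) :=
      IsScalarTower.algebraMap_eq k L E
    have h2 : f.map (algebraMap k E)
        = C (algebraMap k E (a 0)) * ∏ i : Fin r, (X - C (algebraMap L E (Θ i))) := by
      rw [h1, ← Polynomial.map_map, hsplit, Polynomial.map_mul, Polynomial.map_C,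
        Polynomial.map_prod]
      simp [h1]
    calc (minpoly k θ).map (algebraMap k E)
        = f.map (algebraMap k E) * C ((algebraMap k E (a 0))⁻¹) := by
          rw [← hmin, Polynomial.map_mul, Polynomial.map_C, map_inv₀]
      _ = ∏ i : Fin r, (X - C (algebraMap L E (Θ i))) := by
          rw [h2, mul_comm, ← mul_assoc, ← C_mul, inv_mul_cancel₀ ha0E, C_1, one_mul]
  have hroots : ((minpoly k θ).map (algebraMap k E)).roots
      = Multiset.map (fun i : Fin r => algebraMap L E (Θ i)) Finset.univ.val := by
    rw [hgE, ← Polynomial.roots_multiset_prod_X_sub_C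
      (Multiset.map (fun i : Fin r => algebraMap L E (Θ i)) Finset.univ.val)]
    congr 1
    rw [Multiset.map_map, Finset.prod_eq_multiset_prod]
    rfl
  have hnd : (Multiset.map (fun i : Fin r => algebraMap L E (Θ i)) Finset.univ.val).Nodup :=
    hroots ▸ Polynomial.nodup_roots (Polynomial.Separable.map hsep)
  -- the embeddings of K into E
  have hcard : Fintype.card (Fin r) = Fintype.card (K →ₐ[k] E) := by
    rw [Fintype.card_fin, AlgHom.card, hfr]
  set e' : Fin r ≃ (K →ₐ[k] E) := Fintype.equivOfCardEq hcard with he'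
  set e : Fin pB.dim ≃ (K →ₐ[k] E) := (finCongr hdim).trans e' with he
  have hmemy : ∀ φ : K →ₐ[k] E, ∃ i : Fin r, algebraMap L E (Θ i) = φ θ := by
    intro φ
    have hmem : φ θ ∈ ((minpoly k θ).map (algebraMap k E)).roots := by
      rw [Polynomial.mem_roots (Polynomial.map_ne_zero hg0)]
      show Polynomial.IsRoot _ _
      rw [Polynomial.IsRoot, Polynomial.eval_map, ← Polynomial.aeval_def,
        Polynomial.aeval_algHom_apply, minpoly.aeval, map_zero]
    rw [hroots] at hmem
    obtain ⟨i, _, hi⟩ := Multiset.mem_map.mp hmem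
    exact ⟨i, hi⟩
  have hyinj : Function.Injective (fun i : Fin r => (e' i) θ) := by
    intro i j hij
    apply e'.injective
    refine pB.algHom_ext ?_
    rw [hgenθ]
    exact hij
  choose F hF using fun i : Fin r => hmemy (e' i)
  have hFinj : Function.Injective F := fun i j hij => hyinj (by
    show (e' i) θ = (e' j) θ
    rw [← hF i, ← hF j, hij])
  have hFbij : Function.Bijective F := Finite.injective_iff_bijective.mp hFinj
  set σ : Equiv.Perm (Fin r) := Equiv.ofBijective F hFbij with hσ
  calc algebraMap k E (Algebra.discr k ⇑pB.basis)
      = ∏ i : Fin pB.dim, ∏ j ∈ Finset.Ioi i, (e j pB.gen - e i pB.gen) ^ 2 :=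
        Algebra.discr_powerBasis_eq_prod k E pB e
    _ = ∏ i : Fin r, ∏ j ∈ Finset.Ioi i, ((e' j) θ - (e' i) θ) ^ 2 := by
        have hcastθ : ∀ j : Fin pB.dim, e j pB.gen = (e' (Fin.cast hdim j)) θ := by
          intro j
          rw [hgenθ]
          rfl
        simp_rw [hcastθ]
        exact aux_cast hdim (fun i => (e' i) θ)
    _ = ∏ i : Fin r, ∏ j ∈ Finset.Ioi i,
          (algebraMap L E (Θ j) - algebraMap L E (Θ i)) ^ 2 := by
        have hyΘ : ∀ i, (e' i) θ = algebraMap L E (Θ (σ i)) := fun i => (hF i).symm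
        simp_rw [hyΘ]
        exact aux_perm (fun i => algebraMap L E (Θ i)) σ
    _ = ∏ p : Fin r, ∏ q ∈ Finset.Ioi p,
          (algebraMap L E (Θ p) - algebraMap L E (Θ q)) ^ 2 :=
        Finset.prod_congr rfl fun i _ => Finset.prod_congr rfl fun j _ => aux_sq_comm _ _
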